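/- Let x: Ω → ℝ^N and y: Ω → ℝ be square-integrable, λ > 0, μ_x := E[x], Γ(0) := E[(x−μ_x)(x−μ_x)ᵀ], v := Cov(y,x), and let W_out := (Γ(0)+λI_N)^{-1} v, a_out := E[y] − W_outᵀ μ_x. Then the mean square error committed with the optimal readout satisfies E[(W_outᵀ x + a_out − y)²] = var(y) − vᵀ (Γ(0)+λI_N)^{-1} (Γ(0)+2λI_N) (Γ(0)+λI_N)^{-1} v. -/

import Mathlib

open MeasureTheory Matrix

lemma memℒp_two_mul_integrable {Ω : Type*} [MeasureSpace Ω] {f g : Ω → ℝ}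
    (hf : MemLp f 2 volume) (hg : MemLp g 2 volume) :
    Integrable (fun ω => f ω * g ω) volume := by
  have h := (((hf.add hg).integrable_sq.sub hf.integrable_sq).sub hg.integrable_sq).div_const 2
  have he : (fun ω => f ω * g ω)
      = fun ω => ((f ω + g ω) ^ 2 - f ω ^ 2 - g ω ^ 2) / 2 := funext fun ω => by ring
  rw [he]; exact h

lemma optimal_readout_key_algebra {N : ℕ} (Γ₀ : Matrix (Fin N) (Fin N) ℝ) (hsym : Γ₀ᵀ = Γ₀)
    (lam : ℝ) (v Wout : Fin N → ℝ)
    (hW : Wout = (Γ₀ + lam • (1 : Matrix (Fin N) (Fin N) ℝ))⁻¹.mulVec v) :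
    (∑ i, ∑ j, (Wout i * Wout j) * Γ₀ i j) - ∑ i, (2 * Wout i) * v i
      = - v ⬝ᵥ ((Γ₀ + lam • (1 : Matrix (Fin N) (Fin N) ℝ))⁻¹
            * (Γ₀ + (2 * lam) • (1 : Matrix (Fin N) (Fin N) ℝ))
            * (Γ₀ + lam • (1 : Matrix (Fin N) (Fin N) ℝ))⁻¹).mulVec v := by
  set A := Γ₀ + lam • (1 : Matrix (Fin N) (Fin N) ℝ) with hA
  have h1 : (∑ i, ∑ j, (Wout i * Wout j) * Γ₀ i j) = Wout ⬝ᵥ Γ₀.mulVec Wout := by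
    simp only [dotProduct, mulVec, Finset.mul_sum]
    exact Finset.sum_congr rfl fun i _ => Finset.sum_congr rfl fun j _ => by ring
  have h2 : (∑ i, (2 * Wout i) * v i) = 2 * (Wout ⬝ᵥ v) := by
    simp only [dotProduct, Finset.mul_sum]
    exact Finset.sum_congr rfl fun i _ => by ring
  rw [h1, h2]
  by_cases hdet : IsUnit A.det
  · have hAv : A.mulVec Wout = v := by
      rw [hW, Matrix.mulVec_mulVec, Matrix.mul_nonsing_inv _ hdet, Matrix.one_mulVec]
    have hsymA : Aᵀ = A := by
      simp [hA, Matrix.transpose_add, hsym, Matrix.transpose_smul]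
    have hsymInv : (A⁻¹)ᵀ = A⁻¹ := by rw [Matrix.transpose_nonsing_inv, hsymA]
    have hG : Γ₀.mulVec Wout = v - lam • Wout := by
      have : Γ₀ = A - lam • (1 : Matrix (Fin N) (Fin N) ℝ) := by
        rw [hA, add_sub_cancel_right]
      rw [this, Matrix.sub_mulVec, hAv, Matrix.smul_mulVec, Matrix.one_mulVec]
    have hMv : ((A⁻¹ * (Γ₀ + (2 * lam) • (1 : Matrix (Fin N) (Fin N) ℝ)) * A⁻¹)).mulVec v
        = Wout + lam • A⁻¹.mulVec Wout := by
      rw [← Matrix.mulVec_mulVec, ← Matrix.mulVec_mulVec, ← hW, Matrix.add_mulVec, hG,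
        Matrix.smul_mulVec, Matrix.one_mulVec]
      have : v - lam • Wout + (2 * lam) • Wout = v + lam • Wout := by
        ext i; simp [Pi.smul_apply, smul_eq_mul]; ring
      rw [this, Matrix.mulVec_add, ← hW, Matrix.mulVec_smul]
    have hvAW : v ⬝ᵥ A⁻¹.mulVec Wout = Wout ⬝ᵥ Wout := by
      rw [Matrix.dotProduct_mulVec, ← Matrix.mulVec_transpose, hsymInv, ← hW]
    rw [neg_dotProduct, hMv, dotProduct_add, dotProduct_smul, hvAW, hG,
      dotProduct_sub, dotProduct_smul, dotProduct_comm v Wout]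
    simp only [smul_eq_mul]; ring
  · rw [hW, Matrix.nonsing_inv_apply_not_isUnit _ hdet]
    simp

/-- With `μₓ := E[x]`, `Γ₀ := E[(x−μₓ)(x−μₓ)ᵀ]`, `v := Cov(y,x)`,
`W_out := (Γ₀+λI)⁻¹ v` and `a_out := E[y] − W_outᵀ μₓ`, the optimal-readout mean
square error satisfies
`E[(W_outᵀ x + a_out − y)²] = var(y) − vᵀ (Γ₀+λI)⁻¹ (Γ₀+2λI) (Γ₀+λI)⁻¹ v`. -/
theorem optimal_readout_mse_formula
    {Ω : Type*} [MeasureSpace Ω] [IsProbabilityMeasure (volume : Measure Ω)]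
    {N : ℕ} (x : Ω → Fin N → ℝ) (y : Ω → ℝ)
    (hx : ∀ i, MemLp (fun ω => x ω i) 2 volume) (hy : MemLp y 2 volume)
    (lam : ℝ) (hlam : 0 < lam)
    (μx : Fin N → ℝ) (hμx : ∀ i, μx i = ∫ ω, x ω i)
    (Γ₀ : Matrix (Fin N) (Fin N) ℝ)
    (hΓ₀ : ∀ i j, Γ₀ i j = ∫ ω, (x ω i - μx i) * (x ω j - μx j))
    (v : Fin N → ℝ) (hv : ∀ i, v i = ∫ ω, (y ω - ∫ ω', y ω') * (x ω i - μx i))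
    (Wout : Fin N → ℝ) (hWout : Wout = (Γ₀ + lam • (1 : Matrix (Fin N) (Fin N) ℝ))⁻¹.mulVec v)
    (aout : ℝ) (haout : aout = (∫ ω, y ω) - ∑ i, Wout i * μx i) :
    ∫ ω, ((∑ i, Wout i * x ω i) + aout - y ω) ^ 2
      = (∫ ω, (y ω - ∫ ω', y ω') ^ 2)
        - v ⬝ᵥ ((Γ₀ + lam • (1 : Matrix (Fin N) (Fin N) ℝ))⁻¹
            * (Γ₀ + (2 * lam) • (1 : Matrix (Fin N) (Fin N) ℝ))
            * (Γ₀ + lam • (1 : Matrix (Fin N) (Fin N) ℝ))⁻¹).mulVec v := by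
  set Ey := ∫ ω', y ω' with hEy
  have hD : ∀ i, MemLp (fun ω => x ω i - μx i) 2 volume :=
    fun i => (hx i).sub (memLp_const _)
  have hZ : MemLp (fun ω => y ω - Ey) 2 volume := hy.sub (memLp_const _)
  have iDD : ∀ i j, Integrable (fun ω => (x ω i - μx i) * (x ω j - μx j)) volume :=
    fun i j => memℒp_two_mul_integrable (hD i) (hD j)
  have iZD : ∀ i, Integrable (fun ω => (y ω - Ey) * (x ω i - μx i)) volume :=
    fun i => memℒp_two_mul_integrable hZ (hD i)
  have iZZ : Integrable (fun ω => (y ω - Ey) ^ 2) volume := hZ.integrable_sq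
  have hsym : Γ₀ᵀ = Γ₀ := by
    ext i j
    rw [Matrix.transpose_apply, hΓ₀ i j, hΓ₀ j i]
    exact integral_congr_ae (Filter.Eventually.of_forall fun ω => mul_comm _ _)
  have hpt : ∀ ω, ((∑ i, Wout i * x ω i) + aout - y ω) ^ 2
      = (∑ i, ∑ j, (Wout i * Wout j) * ((x ω i - μx i) * (x ω j - μx j)))
        - (∑ i, (2 * Wout i) * ((y ω - Ey) * (x ω i - μx i)))
        + (y ω - Ey) ^ 2 := by
    intro ω
    have h1 : (∑ i, Wout i * x ω i) + aout - y ω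
        = (∑ i, Wout i * (x ω i - μx i)) - (y ω - Ey) := by
      rw [haout]
      simp only [mul_sub, Finset.sum_sub_distrib]
      ring
    rw [h1, sub_sq, pow_two (∑ i, Wout i * (x ω i - μx i)), Finset.sum_mul_sum]
    congr 1
    congr 1
    · exact Finset.sum_congr rfl fun i _ => Finset.sum_congr rfl fun j _ => by ring
    · rw [Finset.mul_sum, Finset.sum_mul]
      exact Finset.sum_congr rfl fun i _ => by ring
  have IA : Integrable (fun ω => ∑ i, ∑ j,
      (Wout i * Wout j) * ((x ω i - μx i) * (x ω j - μx j))) volume :=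
    integrable_finset_sum _ fun i _ =>
      integrable_finset_sum _ fun j _ => (iDD i j).const_mul _
  have IB : Integrable (fun ω => ∑ i, (2 * Wout i) * ((y ω - Ey) * (x ω i - μx i))) volume :=
    integrable_finset_sum _ fun i _ => (iZD i).const_mul _
  have key := optimal_readout_key_algebra Γ₀ hsym lam v Wout hWout
  rw [neg_dotProduct] at key
  calc ∫ ω, ((∑ i, Wout i * x ω i) + aout - y ω) ^ 2
      = ∫ ω, ((∑ i, ∑ j, (Wout i * Wout j) * ((x ω i - μx i) * (x ω j - μx j)))
          - (∑ i, (2 * Wout i) * ((y ω - Ey) * (x ω i - μx i)))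
          + (y ω - Ey) ^ 2) := by
        exact integral_congr_ae (Filter.Eventually.of_forall hpt)
    _ = (∑ i, ∑ j, (Wout i * Wout j) * Γ₀ i j) - (∑ i, (2 * Wout i) * v i)
          + ∫ ω, (y ω - Ey) ^ 2 := by
        have IAB : Integrable (fun ω =>
            (∑ i, ∑ j, (Wout i * Wout j) * ((x ω i - μx i) * (x ω j - μx j)))
            - (∑ i, (2 * Wout i) * ((y ω - Ey) * (x ω i - μx i)))) volume := IA.sub IB
        rw [integral_add IAB iZZ, integral_sub IA IB,
          integral_finset_sum _ fun i _ =>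
            integrable_finset_sum _ fun j _ => (iDD i j).const_mul _,
          integral_finset_sum _ fun i _ => (iZD i).const_mul _]
        congr 1
        congr 1
        · exact Finset.sum_congr rfl fun i _ => by
            rw [integral_finset_sum _ fun j _ => (iDD i j).const_mul _]
            exact Finset.sum_congr rfl fun j _ => by
              rw [integral_const_mul, ← hΓ₀ i j]
        · exact Finset.sum_congr rfl fun i _ => by
            rw [integral_const_mul, ← hv i]
    _ = (∫ ω, (y ω - Ey) ^ 2)
        - v ⬝ᵥ ((Γ₀ + lam • (1 : Matrix (Fin N) (Fin N) ℝ))⁻¹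
            * (Γ₀ + (2 * lam) • (1 : Matrix (Fin N) (Fin N) ℝ))
            * (Γ₀ + lam • (1 : Matrix (Fin N) (Fin N) ℝ))⁻¹).mulVec v := by
        linarith [key]
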